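/- arXiv:1404.6632 — 5 statements merged into one kernel-verified Lean document; each statement's English description precedes it below -/
import Mathlib

section
/- Let M = (Q, Σ, δ, q₀, F) be a minimal DFA with |Q| = n ≥ 3, and suppose some word w₀ induces a transformation of Q of rank n − 1. Let X ⊆ Q with 1 ≤ |X| < n − 1 be such that A_X is nonempty and has state complexity Ψ(n, |X|). Then there exists Z ⊆ Q with |Z| = |X| + 1 such that A_Z is nonempty. -/
/-- `Psi n s` of Brzozowski–Tamm: the tight upper bound on the state complexity
of an atom `A_S` with `|S| = s` of a language of state complexity `n`. -/
def Psi (n s : ℕ) : ℕ :=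
  if s = 0 ∨ s = n then 2 ^ n - 1
  else 1 + ∑ k ∈ Finset.Icc 1 s, ∑ l ∈ Finset.Icc 1 (n - s),
    Nat.choose n k * Nat.choose (n - k) l

/-- The Myhill–Nerode right congruence of a language `K`. -/
def rightCong {A : Type*} (K : Set (List A)) : Setoid (List A) where
  r x y := ∀ z, x ++ z ∈ K ↔ y ++ z ∈ K
  iseqv := ⟨fun _ _ => Iff.rfl, fun h z => (h z).symm, fun h1 h2 z => (h1 z).trans (h2 z)⟩

/-- The state complexity of a language: the number of classes of its
Myhill–Nerode right congruence. -/
noncomputable def stateComplexity {A : Type*} (K : Set (List A)) : ℕ :=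
  Nat.card (Quotient (rightCong K))

/-- The atom `A_S` of the language of the DFA `M`. -/
def atom {A Q : Type*} (M : DFA A Q) (S : Set Q) : Set (List A) :=
  {w | ∀ q, M.evalFrom q w ∈ M.accept ↔ q ∈ S}

/-- A DFA is minimal iff all its states are reachable and pairwise distinguishable. -/
def IsMinimal {A Q : Type*} (M : DFA A Q) : Prop :=
  (∀ q, ∃ w : List A, M.evalFrom M.start w = q) ∧
  ∀ p q : Q, p ≠ q → ∃ w : List A,
    ¬(M.evalFrom p w ∈ M.accept ↔ M.evalFrom q w ∈ M.accept)

/-- The set of states from which `w` leads into the accepting set. -/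
def Sof {A Q : Type*} (M : DFA A Q) (w : List A) : Set Q :=
  {q | M.evalFrom q w ∈ M.accept}

/-- The language of words accepted from every state of `P` and rejected from every
state of `R`. -/
def Lset {A Q : Type*} (M : DFA A Q) (P R : Set Q) : Set (List A) :=
  {z | P ⊆ Sof M z ∧ Disjoint R (Sof M z)}

lemma mem_atom_iff {A Q : Type*} (M : DFA A Q) (S : Set Q) (w : List A) :
    w ∈ atom M S ↔ Sof M w = S := by
  simp only [atom, Set.mem_setOf_eq, Sof, Set.ext_iff, Set.mem_setOf_eq]

lemma quot_eq {A Q : Type*} (M : DFA A Q) (X : Set Q) (v : List A) :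
    {z | v ++ z ∈ atom M X} =
      Lset M ((fun q => M.evalFrom q v) '' X) ((fun q => M.evalFrom q v) '' Xᶜ) := by
  ext z
  simp only [Set.mem_setOf_eq, atom, Lset, Sof, DFA.evalFrom_of_append]
  constructor
  · intro h
    constructor
    · rintro p ⟨q, hq, rfl⟩
      exact (h q).mpr hq
    · rw [Set.disjoint_left]
      rintro p ⟨q, hq, rfl⟩ hp
      exact hq ((h q).mp hp)
  · rintro ⟨h1, h2⟩ q
    constructor
    · intro hq
      by_contra hqX
      exact (Set.disjoint_left.mp h2 ⟨q, hqX, rfl⟩) hq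
    · exact fun hq => h1 ⟨q, hq, rfl⟩

lemma countB {Q : Type*} [Fintype Q] [DecidableEq Q] (n s : ℕ) (hQ : Fintype.card Q = n) :
    ((Finset.Icc 1 s ×ˢ Finset.Icc 1 (n-s)).biUnion (fun kl =>
      (Finset.powersetCard kl.1 (Finset.univ : Finset Q)).biUnion (fun P =>
        (Finset.powersetCard kl.2 Pᶜ).image (fun R => (P, R))))).card ≤
    ∑ k ∈ Finset.Icc 1 s, ∑ l ∈ Finset.Icc 1 (n - s), Nat.choose n k * Nat.choose (n - k) l := by
  refine le_trans Finset.card_biUnion_le ?_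
  rw [Finset.sum_product]
  refine Finset.sum_le_sum fun k hk => Finset.sum_le_sum fun l hl => ?_
  refine le_trans Finset.card_biUnion_le ?_
  have h1 : ∀ P ∈ Finset.powersetCard k (Finset.univ : Finset Q),
      ((Finset.powersetCard l Pᶜ).image (fun R => (P, R))).card ≤ Nat.choose (n - k) l := by
    intro P hP
    refine le_trans Finset.card_image_le ?_
    rw [Finset.card_powersetCard, Finset.card_compl, hQ,
      (Finset.mem_powersetCard.mp hP).2]
  refine le_trans (Finset.sum_le_sum h1) ?_
  rw [Finset.sum_const, Finset.card_powersetCard, Finset.card_univ, hQ, smul_eq_mul]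

/-- in a minimal DFA with `n ≥ 3` states having a word inducing a
transformation of rank `n - 1`, if `A_X` with `1 ≤ |X| < n - 1` is a nonempty
atom of maximal state complexity, then some `A_Z` with `|Z| = |X| + 1` is a
nonempty atom. -/
theorem statement13 {A Q : Type*} [Fintype A] [Fintype Q] (M : DFA A Q)
    (n : ℕ) (hQ : Fintype.card Q = n) (hn : 3 ≤ n) (hmin : IsMinimal M)
    (w₀ : List A) (hrank : (Set.range (fun q => M.evalFrom q w₀)).ncard = n - 1)
    (X : Set Q) (hX1 : 1 ≤ X.ncard) (hX2 : X.ncard < n - 1)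
    (hne : (atom M X).Nonempty)
    (hsc : stateComplexity (atom M X) = Psi n X.ncard) :
    ∃ Z : Set Q, Z.ncard = X.ncard + 1 ∧ (atom M Z).Nonempty := by
  classical
  set s := X.ncard with hs
  set f : Q → Q := fun q => M.evalFrom q w₀ with hf
  have hXfin : X.Finite := Set.toFinite X
  have hXne : X.Nonempty := (Set.ncard_pos hXfin).mp hX1
  have hXc_card : Xᶜ.ncard = n - s := by
    have h := Set.ncard_add_ncard_compl X
    rw [Nat.card_eq_fintype_card, hQ] at h
    omega
  have hXcne : Xᶜ.Nonempty := by
    apply (Set.ncard_pos (Set.toFinite _)).mp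
    rw [hXc_card]; omega
  -- KEY: every good pair has a nonempty `Lset`.
  have key : ∀ P R : Set Q, P.Nonempty → R.Nonempty → Disjoint P R →
      P.ncard ≤ s → R.ncard ≤ n - s → (Lset M P R).Nonempty := by
    by_contra hcon
    push_neg at hcon
    obtain ⟨P₀, R₀, hP₀ne, hR₀ne, hdisj₀, hP₀c, hR₀c, hL₀⟩ := hcon
    have hL₀' : ¬ (Lset M P₀ R₀).Nonempty := by
      rw [Set.nonempty_iff_ne_empty]
      intro h; exact absurd hL₀ (by simp [Set.not_nonempty_iff_eq_empty] at h ⊢; tauto)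
    -- the set of quotient languages
    set 𝓠 : Set (Set (List A)) := Set.range (fun v : List A =>
      Lset M ((fun q => M.evalFrom q v) '' X) ((fun q => M.evalFrom q v) '' Xᶜ)) with h𝓠
    set GN : Set (Set Q × Set Q) := {pr | pr.1.Nonempty ∧ pr.2.Nonempty ∧ Disjoint pr.1 pr.2 ∧
      pr.1.ncard ≤ s ∧ pr.2.ncard ≤ n - s ∧ (Lset M pr.1 pr.2).Nonempty} with hGNdef
    have hQfin : 𝓠.Finite := by
      have he : 𝓠 = (fun pr : Set Q × Set Q => Lset M pr.1 pr.2) ''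
          Set.range (fun v : List A => (((fun q => M.evalFrom q v) '' X),
            ((fun q => M.evalFrom q v) '' Xᶜ))) := by
        rw [← Set.range_comp]; rfl
      rw [he]
      exact (Set.toFinite _).image _
    have hLq : ∀ v w : List A, (∀ z, v ++ z ∈ atom M X ↔ w ++ z ∈ atom M X) ↔
        (Lset M ((fun q => M.evalFrom q v) '' X) ((fun q => M.evalFrom q v) '' Xᶜ) =
         Lset M ((fun q => M.evalFrom q w) '' X) ((fun q => M.evalFrom q w) '' Xᶜ)) := by
      intro v w
      rw [← quot_eq, ← quot_eq]
      constructor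
      · intro h; ext z; exact h z
      · intro h z; exact Set.ext_iff.mp h z
    have hcard1 : stateComplexity (atom M X) ≤ 𝓠.ncard := by
      haveI : Finite ↥𝓠 := hQfin.to_subtype
      rw [stateComplexity, ← Nat.card_coe_set_eq]
      have hresp : ∀ v w : List A, (rightCong (atom M X)).r v w →
          ((⟨Lset M ((fun q => M.evalFrom q v) '' X) ((fun q => M.evalFrom q v) '' Xᶜ),
            ⟨v, rfl⟩⟩ : ↥𝓠) =
           (⟨Lset M ((fun q => M.evalFrom q w) '' X) ((fun q => M.evalFrom q w) '' Xᶜ),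
            ⟨w, rfl⟩⟩ : ↥𝓠)) := by
        intro v w h
        exact Subtype.ext ((hLq v w).mp h)
      refine Nat.card_le_card_of_injective
        (Quot.lift (fun v : List A =>
          (⟨Lset M ((fun q => M.evalFrom q v) '' X) ((fun q => M.evalFrom q v) '' Xᶜ),
            ⟨v, rfl⟩⟩ : ↥𝓠)) hresp) ?_
      intro x y
      obtain ⟨v, rfl⟩ := Quot.exists_rep x
      obtain ⟨w, rfl⟩ := Quot.exists_rep y
      intro h
      exact Quot.sound ((hLq v w).mpr (congrArg Subtype.val h))
    have hsub : 𝓠 ⊆ insert ∅ ((fun pr : Set Q × Set Q => Lset M pr.1 pr.2) '' GN) := by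
      rintro t ⟨v, rfl⟩
      rcases Set.eq_empty_or_nonempty
        (Lset M ((fun q => M.evalFrom q v) '' X) ((fun q => M.evalFrom q v) '' Xᶜ)) with he | hne'
      · exact Set.mem_insert_iff.mpr (Or.inl he)
      · refine Set.mem_insert_iff.mpr (Or.inr
          ⟨(((fun q => M.evalFrom q v) '' X), ((fun q => M.evalFrom q v) '' Xᶜ)),
            ⟨hXne.image _, hXcne.image _, ?_, Set.ncard_image_le hXfin, ?_, hne'⟩, rfl⟩)
        · obtain ⟨z, hz1, hz2⟩ := hne'
          rw [Set.disjoint_left]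
          rintro p hp1 hp2
          exact (Set.disjoint_left.mp hz2 hp2) (hz1 hp1)
        · rw [← hXc_card]
          exact Set.ncard_image_le (Set.toFinite _)
    have hGNfin : GN.Finite := Set.toFinite GN
    have hc2 : 𝓠.ncard ≤ ((fun pr : Set Q × Set Q => Lset M pr.1 pr.2) '' GN).ncard + 1 :=
      le_trans (Set.ncard_le_ncard hsub ((hGNfin.image _).insert _)) (Set.ncard_insert_le _ _)
    have hc3 : ((fun pr : Set Q × Set Q => Lset M pr.1 pr.2) '' GN).ncard ≤ GN.ncard :=
      Set.ncard_image_le hGNfin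
    -- counting
    set B : Finset (Finset Q × Finset Q) := (Finset.Icc 1 s ×ˢ Finset.Icc 1 (n-s)).biUnion
      (fun kl => (Finset.powersetCard kl.1 (Finset.univ : Finset Q)).biUnion (fun P =>
        (Finset.powersetCard kl.2 Pᶜ).image (fun R => (P, R)))) with hB
    have hmemB : ∀ pr : Set Q × Set Q, pr.1.Nonempty → pr.2.Nonempty → Disjoint pr.1 pr.2 →
        pr.1.ncard ≤ s → pr.2.ncard ≤ n - s → (pr.1.toFinset, pr.2.toFinset) ∈ B := by
      intro pr h1 h2 hd hcc1 hcc2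
      rw [hB, Finset.mem_biUnion]
      refine ⟨(pr.1.ncard, pr.2.ncard), ?_, ?_⟩
      · rw [Finset.mem_product, Finset.mem_Icc, Finset.mem_Icc]
        have e1 := (Set.ncard_pos (Set.toFinite _)).mpr h1
        have e2 := (Set.ncard_pos (Set.toFinite _)).mpr h2
        exact ⟨⟨e1, hcc1⟩, ⟨e2, hcc2⟩⟩
      · rw [Finset.mem_biUnion]
        refine ⟨pr.1.toFinset, ?_, ?_⟩
        · rw [Finset.mem_powersetCard]
          exact ⟨Finset.subset_univ _, (Set.ncard_eq_toFinset_card' _).symm⟩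
        · rw [Finset.mem_image]
          refine ⟨pr.2.toFinset, ?_, rfl⟩
          rw [Finset.mem_powersetCard]
          refine ⟨?_, (Set.ncard_eq_toFinset_card' _).symm⟩
          intro x hx
          rw [Finset.mem_compl, Set.mem_toFinset]
          exact fun hx1 => Set.disjoint_left.mp hd hx1 (Set.mem_toFinset.mp hx)
    have hmemB₀ : (P₀.toFinset, R₀.toFinset) ∈ B :=
      hmemB (P₀, R₀) hP₀ne hR₀ne hdisj₀ hP₀c hR₀c
    have hGNle : GN.ncard ≤ (B.erase (P₀.toFinset, R₀.toFinset)).card := by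
      rw [Set.ncard_eq_toFinset_card GN hGNfin]
      apply Finset.card_le_card_of_injOn (fun pr => (pr.1.toFinset, pr.2.toFinset))
      · intro pr hpr
        rw [Finset.mem_coe, Set.Finite.mem_toFinset] at hpr
        obtain ⟨h1, h2, hd, hcc1, hcc2, hLne⟩ := hpr
        rw [Finset.mem_coe, Finset.mem_erase]
        refine ⟨?_, hmemB pr h1 h2 hd hcc1 hcc2⟩
        intro heq
        have e1 : pr.1 = P₀ := by
          have := congrArg Prod.fst heq
          simpa [Set.toFinset_inj] using this
        have e2 : pr.2 = R₀ := by
          have := congrArg Prod.snd heq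
          simpa [Set.toFinset_inj] using this
        rw [e1, e2] at hLne
        exact hL₀' hLne
      · intro p hp q hq hpq
        have e1 : p.1 = q.1 := by
          have := congrArg Prod.fst hpq
          simpa [Set.toFinset_inj] using this
        have e2 : p.2 = q.2 := by
          have := congrArg Prod.snd hpq
          simpa [Set.toFinset_inj] using this
        exact Prod.ext e1 e2
    have hBerase : (B.erase (P₀.toFinset, R₀.toFinset)).card = B.card - 1 :=
      Finset.card_erase_of_mem hmemB₀
    have hBpos : 1 ≤ B.card := Finset.card_pos.mpr ⟨_, hmemB₀⟩
    have hBle : B.card ≤ ∑ k ∈ Finset.Icc 1 s, ∑ l ∈ Finset.Icc 1 (n - s),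
        Nat.choose n k * Nat.choose (n - k) l := countB n s hQ
    have hΨ : Psi n s = 1 + ∑ k ∈ Finset.Icc 1 s, ∑ l ∈ Finset.Icc 1 (n - s),
        Nat.choose n k * Nat.choose (n - k) l := by
      rw [Psi, if_neg]
      intro h
      rcases h with h | h <;> omega
    rw [hΨ] at hsc
    omega
  -- analysis of the rank `n-1` transformation
  have hcompl : (Set.range f)ᶜ.ncard = 1 := by
    have h := Set.ncard_add_ncard_compl (Set.range f)
    rw [Nat.card_eq_fintype_card, hQ] at h
    omega
  obtain ⟨r, hr⟩ := Set.ncard_eq_one.mp hcompl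
  have hrnot : r ∉ Set.range f := by
    have : r ∈ (Set.range f)ᶜ := by rw [hr]; exact rfl
    exact this
  have hninj : ¬ Function.Injective f := by
    intro hinj
    have : (Set.range f).ncard = n := by
      rw [← Set.image_univ, Set.ncard_image_of_injective _ hinj, Set.ncard_univ,
        Nat.card_eq_fintype_card, hQ]
    omega
  rw [Function.not_injective_iff] at hninj
  obtain ⟨a, b, hab, hne_ab⟩ := hninj
  set d := f a with hd
  have hdrange : d ∈ Set.range f := ⟨a, rfl⟩
  obtain ⟨P, hdP, hPrange, hPcard⟩ := Set.exists_subsuperset_card_eq (n := s)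
    (Set.singleton_subset_iff.mpr hdrange) (by rw [Set.ncard_singleton]; exact hX1)
    (by rw [hrank]; omega)
  have hdinP : d ∈ P := hdP rfl
  set R := (P ∪ {r})ᶜ with hR
  have hPcup : (P ∪ {r}).ncard ≤ s + 1 := by
    refine le_trans (Set.ncard_union_le _ _) ?_
    rw [hPcard, Set.ncard_singleton]
  have hPcup2 : s ≤ (P ∪ {r}).ncard := by
    rw [← hPcard]
    exact Set.ncard_le_ncard Set.subset_union_left (Set.toFinite _)
  have hRcard : R.ncard = n - (P ∪ {r}).ncard := by
    have h := Set.ncard_add_ncard_compl (P ∪ {r})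
    rw [Nat.card_eq_fintype_card, hQ, ← hR] at h
    omega
  have hRne : R.Nonempty := by
    apply (Set.ncard_pos (Set.toFinite _)).mp
    omega
  have hRle : R.ncard ≤ n - s := by omega
  have hPne : P.Nonempty := ⟨d, hdinP⟩
  have hdisj : Disjoint P R := by
    rw [Set.disjoint_left]
    intro x hx hxR
    exact hxR (Or.inl hx)
  obtain ⟨z, hzP, hzR⟩ := key P R hPne hRne hdisj (le_of_eq hPcard) hRle
  have hSz_sub : Sof M z ⊆ P ∪ {r} := by
    intro q hq
    by_contra hq'
    exact Set.disjoint_left.mp hzR hq' hq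
  have hZeq : Sof M (w₀ ++ z) = f ⁻¹' P := by
    ext q
    simp only [Sof, Set.mem_setOf_eq, DFA.evalFrom_of_append, Set.mem_preimage]
    constructor
    · intro h
      have hq : f q ∈ Sof M z := h
      rcases hSz_sub hq with hp | hr'
      · exact hp
      · exact absurd (hr' ▸ (⟨q, rfl⟩ : f q ∈ Set.range f)) hrnot
    · intro hp
      exact hzP hp
  have hfP_card : (f ⁻¹' P).ncard = s + 1 := by
    have hdiffle : ((Set.range f) \ P).ncard ≤ (f ⁻¹' ((Set.range f) \ P)).ncard := by
      have himg : f '' (f ⁻¹' ((Set.range f) \ P)) = (Set.range f) \ P := by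
        rw [Set.image_preimage_eq_inter_range]
        exact Set.inter_eq_left.mpr Set.diff_subset
      calc ((Set.range f) \ P).ncard = (f '' (f ⁻¹' ((Set.range f) \ P))).ncard := by rw [himg]
      _ ≤ _ := Set.ncard_image_le (Set.toFinite _)
    have hdisj2 : Disjoint (f ⁻¹' P) (f ⁻¹' ((Set.range f) \ P)) :=
      Disjoint.preimage f Set.disjoint_sdiff_right
    have hun : (f ⁻¹' P).ncard + (f ⁻¹' ((Set.range f) \ P)).ncard ≤ n := by
      rw [← Set.ncard_union_eq hdisj2 (Set.toFinite _) (Set.toFinite _)]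
      calc ((f ⁻¹' P) ∪ (f ⁻¹' ((Set.range f) \ P))).ncard
          ≤ (Set.univ : Set Q).ncard := Set.ncard_le_ncard (Set.subset_univ _) Set.finite_univ
      _ = n := by rw [Set.ncard_univ, Nat.card_eq_fintype_card, hQ]
    have hdiffcard : ((Set.range f) \ P).ncard = (n-1) - s := by
      rw [Set.ncard_diff hPrange (Set.toFinite _), hrank, hPcard]
    have hlow1 : (P \ {d}).ncard ≤ (f ⁻¹' (P \ {d})).ncard := by
      have himg : f '' (f ⁻¹' (P \ {d})) = P \ {d} := by
        rw [Set.image_preimage_eq_inter_range]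
        exact Set.inter_eq_left.mpr (le_trans Set.diff_subset hPrange)
      calc (P \ {d}).ncard = (f '' (f ⁻¹' (P \ {d}))).ncard := by rw [himg]
      _ ≤ _ := Set.ncard_image_le (Set.toFinite _)
    have hPdcard : (P \ {d}).ncard = s - 1 := by
      rw [Set.ncard_diff_singleton_of_mem hdinP, hPcard]
    have hsplit : (f ⁻¹' (P \ {d})).ncard + 2 ≤ (f ⁻¹' P).ncard := by
      have hsub2 : (f ⁻¹' (P \ {d})) ∪ {a, b} ⊆ f ⁻¹' P := by
        rintro x (hx | hx)
        · exact (Set.mem_preimage.mp hx).1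
        · rcases hx with rfl | rfl
          · exact hdinP
          · rw [Set.mem_preimage, ← hab]
            exact hdinP
      have hdisj3 : Disjoint (f ⁻¹' (P \ {d})) ({a, b} : Set Q) := by
        rw [Set.disjoint_left]
        rintro x hx (rfl | rfl)
        · exact (Set.mem_preimage.mp hx).2 rfl
        · exact (Set.mem_preimage.mp hx).2 hab.symm
      calc (f ⁻¹' (P \ {d})).ncard + 2
          = ((f ⁻¹' (P \ {d})) ∪ {a, b}).ncard := by
            rw [Set.ncard_union_eq hdisj3 (Set.toFinite _) (Set.toFinite _),
              Set.ncard_pair hne_ab]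
      _ ≤ (f ⁻¹' P).ncard := Set.ncard_le_ncard hsub2 (Set.toFinite _)
    omega
  refine ⟨Sof M (w₀ ++ z), ?_, ⟨w₀ ++ z, (mem_atom_iff M _ _).mpr rfl⟩⟩
  rw [hZeq, hfP_card]
end

section
/- Let M = (Q, Σ, δ, q₀, F) be a minimal DFA with |Q| = n ≥ 3, and suppose some word w₀ induces a transformation of Q of rank n − 1. Let X ⊆ Q with 1 < |X| < n be such that A_X is nonempty and has state complexity Ψ(n, |X|). Then there exists Z ⊆ Q with |Z| = |X| − 1 such that A_Z is nonempty. -/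
set_option maxHeartbeats 1000000 in
private lemma pair_count_le {Q : Type*} [Fintype Q] [DecidableEq Q] (s t : ℕ) :
    (Finset.univ.filter (fun v : Finset Q × Finset Q =>
      v.1.Nonempty ∧ v.2.Nonempty ∧ Disjoint v.1 v.2 ∧ v.1.card ≤ s ∧ v.2.card ≤ t)).card
      ≤ ∑ k ∈ Finset.Icc 1 s, ∑ l ∈ Finset.Icc 1 t,
          Nat.choose (Fintype.card Q) k * Nat.choose (Fintype.card Q - k) l := by

  have hsub : (Finset.univ.filter (fun v : Finset Q × Finset Q =>
      v.1.Nonempty ∧ v.2.Nonempty ∧ Disjoint v.1 v.2 ∧ v.1.card ≤ s ∧ v.2.card ≤ t)) ⊆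
      (Finset.Icc 1 s).biUnion (fun k => (Finset.Icc 1 t).biUnion (fun l =>
        (Finset.univ.powersetCard k).biUnion (fun P =>
          (Pᶜ.powersetCard l).image (fun N => (P, N))))) := by
    intro v hv
    simp only [Finset.mem_filter] at hv
    obtain ⟨-, h1, h2, h3, h4, h5⟩ := hv
    simp only [Finset.mem_biUnion, Finset.mem_Icc, Finset.mem_powersetCard, Finset.mem_image]
    refine ⟨v.1.card, ⟨h1.card_pos, h4⟩, v.2.card, ⟨h2.card_pos, h5⟩,
      v.1, ⟨Finset.subset_univ _, rfl⟩, v.2, ?_, rfl⟩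
    exact ⟨fun x hx => Finset.mem_compl.mpr (fun hx1 => Finset.disjoint_left.mp h3 hx1 hx), rfl⟩
  refine (Finset.card_le_card hsub).trans ?_
  refine le_trans (Finset.card_biUnion_le) (Finset.sum_le_sum fun k _ => ?_)
  refine le_trans (Finset.card_biUnion_le) (Finset.sum_le_sum fun l _ => ?_)
  have hbound : ∀ P ∈ (Finset.univ : Finset Q).powersetCard k,
      ((Pᶜ.powersetCard l).image (fun N => (P, N))).card ≤
        Nat.choose (Fintype.card Q - k) l := by
    intro P hP
    refine (Finset.card_image_le).trans ?_
    rw [Finset.card_powersetCard, Finset.card_compl,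
      (Finset.mem_powersetCard.mp hP).2]
  calc _ ≤ ((Finset.univ : Finset Q).powersetCard k).card * Nat.choose (Fintype.card Q - k) l :=
      Finset.card_biUnion_le_card_mul _ _ _ hbound
    _ = Nat.choose (Fintype.card Q) k * Nat.choose (Fintype.card Q - k) l := by
      rw [Finset.card_powersetCard, Finset.card_univ]

private lemma stateComplexity_eq_ncard {A : Type*} (K : Set (List A)) :
    stateComplexity K = (Set.range fun u : List A => {z | u ++ z ∈ K}).ncard := by
  rw [stateComplexity, ← Nat.card_coe_set_eq]
  refine Nat.card_eq_of_bijective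
    (Quotient.lift (fun u => (⟨{z | u ++ z ∈ K}, ⟨u, rfl⟩⟩ :
        (Set.range fun u : List A => {z | u ++ z ∈ K})))
      (fun u v h => Subtype.ext (Set.ext fun z => h z))) ⟨?_, ?_⟩
  · intro a b
    induction a using Quotient.ind with | _ u =>
    induction b using Quotient.ind with | _ v =>
    intro h
    refine Quotient.sound fun z => ?_
    have h2 := congrArg Subtype.val h
    simpa using Set.ext_iff.mp h2 z
  · rintro ⟨-, u, rfl⟩
    exact ⟨⟦u⟧, rfl⟩

/-- in a minimal DFA with `n ≥ 3` states having a word inducing a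
transformation of rank `n - 1`, if `A_X` with `1 < |X| < n` is a nonempty atom
of maximal state complexity, then some `A_Z` with `|Z| = |X| - 1` is a nonempty
atom. -/
theorem statement14 {A Q : Type*} [Fintype A] [Fintype Q] (M : DFA A Q)
    (n : ℕ) (hQ : Fintype.card Q = n) (hn : 3 ≤ n) (hmin : IsMinimal M)
    (w₀ : List A) (hrank : (Set.range (fun q => M.evalFrom q w₀)).ncard = n - 1)
    (X : Set Q) (hX1 : 1 < X.ncard) (hX2 : X.ncard < n)
    (hne : (atom M X).Nonempty)
    (hsc : stateComplexity (atom M X) = Psi n X.ncard) :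
    ∃ Z : Set Q, Z.ncard = X.ncard - 1 ∧ (atom M Z).Nonempty := by
  classical
  set s := X.ncard with hsdef
  have hQn : Nat.card Q = n := by rw [Nat.card_eq_fintype_card, hQ]
  set g : Q → Q := fun q => M.evalFrom q w₀ with hgdef
  -- the missing state m
  have hrange_ne : Set.range g ≠ Set.univ := by
    intro h
    rw [h, Set.ncard_univ, hQn] at hrank
    omega
  obtain ⟨m, hm⟩ := (Set.ne_univ_iff_exists_notMem _).mp hrange_ne
  have hmr : ∀ q, g q ≠ m := fun q h => hm ⟨q, h⟩
  -- the merged pair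
  have hginj : ¬ Function.Injective g := by
    intro h
    exact hrange_ne (Set.range_eq_univ.mpr (Finite.injective_iff_surjective.mp h))
  rw [Function.not_injective_iff] at hginj
  obtain ⟨p1, p2, hg12, hp12⟩ := hginj
  set r : Q := g p1 with hrdef
  -- range g = univ \ {m}
  have hrange : Set.range g = Set.univ \ {m} := by
    have hsub : Set.range g ⊆ Set.univ \ {m} := by
      rintro x ⟨q, rfl⟩
      exact ⟨trivial, fun hx => hm ⟨q, hx⟩⟩
    refine Set.eq_of_subset_of_ncard_le hsub ?_ (Set.toFinite _)
    rw [Set.ncard_diff_singleton_of_mem (Set.mem_univ m), Set.ncard_univ, hQn, hrank]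
  -- injectivity of g away from p2
  have hc1 : Fintype.card {q : Q // q ≠ p2} = n - 1 := by
    have := Fintype.card_subtype_compl (fun q : Q => q = p2)
    rw [Fintype.card_subtype_eq, hQ] at this
    exact this
  have hc2 : Fintype.card {x : Q // x ≠ m} = n - 1 := by
    have := Fintype.card_subtype_compl (fun q : Q => q = m)
    rw [Fintype.card_subtype_eq, hQ] at this
    exact this
  have hg'bij : Function.Bijective (fun q : {q : Q // q ≠ p2} =>
      (⟨g q.1, hmr q.1⟩ : {x : Q // x ≠ m})) := by
    rw [Fintype.bijective_iff_surjective_and_card]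
    constructor
    · rintro ⟨x, hx⟩
      have hxr : x ∈ Set.range g := by rw [hrange]; exact ⟨trivial, hx⟩
      obtain ⟨q, rfl⟩ := hxr
      by_cases hq : q = p2
      · refine ⟨⟨p1, hp12⟩, Subtype.ext ?_⟩
        show g p1 = g q
        rw [hq]
        exact hg12
      · exact ⟨⟨q, hq⟩, rfl⟩
    · rw [hc1, hc2]
  have hinj : ∀ a b : Q, a ≠ p2 → b ≠ p2 → g a = g b → a = b := by
    intro a b ha hb h
    have := hg'bij.1 (a₁ := ⟨a, ha⟩) (a₂ := ⟨b, hb⟩) (Subtype.ext h)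
    exact congrArg Subtype.val this
  -- choose S₀ ⊆ range g \ {r} with |S₀| = s - 1
  have hrmem : r ∈ Set.range g := ⟨p1, rfl⟩
  have hdr : (Set.range g \ {r}).ncard = n - 2 := by
    rw [Set.ncard_diff_singleton_of_mem hrmem, hrank]
    omega
  obtain ⟨S₀, hS₀sub, hS₀card⟩ := Set.exists_subset_card_eq (s := Set.range g \ {r}) (n := s - 1)
    (by rw [hdr]; omega)
  have hmS₀ : m ∉ S₀ := fun h => hm (hS₀sub h).1
  have hrS₀ : r ∉ S₀ := fun h => (hS₀sub h).2 rfl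
  set S : Set Q := insert m S₀ with hSdef
  have hScard : S.ncard = s := by
    rw [Set.ncard_insert_of_notMem hmS₀ (Set.toFinite _), hS₀card]
    omega
  have hpre : g ⁻¹' S = g ⁻¹' S₀ := by
    ext q
    simp only [Set.mem_preimage, hSdef, Set.mem_insert_iff]
    exact ⟨fun h => h.elim (fun h => absurd h (hmr q)) id, Or.inr⟩
  have hInjOn : Set.InjOn g (g ⁻¹' S₀) := by
    intro a ha b hb h
    refine hinj a b ?_ ?_ h
    · rintro rfl
      rw [Set.mem_preimage, ← hg12] at ha
      exact hrS₀ ha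
    · rintro rfl
      rw [Set.mem_preimage, ← hg12] at hb
      exact hrS₀ hb
  have himg : g '' (g ⁻¹' S₀) = S₀ :=
    Set.image_preimage_eq_of_subset ((hS₀sub.trans Set.diff_subset))
  have hpre_card : (g ⁻¹' S₀).ncard = s - 1 := by
    rw [← Set.ncard_image_of_injOn hInjOn, himg, hS₀card]
  -- quotient machinery
  set K := atom M X with hK
  set Lp : Set Q × Set Q → Set (List A) := fun v =>
    {z | (∀ p ∈ v.1, M.evalFrom p z ∈ M.accept) ∧
         (∀ p ∈ v.2, M.evalFrom p z ∉ M.accept)} with hLp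
  set pr : List A → Set Q × Set Q := fun u =>
    ((fun q => M.evalFrom q u) '' X, (fun q => M.evalFrom q u) '' Xᶜ) with hpr
  have hquot : ∀ u : List A, {z | u ++ z ∈ K} = Lp (pr u) := by
    intro u
    ext z
    simp only [hK, atom, Set.mem_setOf_eq, hLp, hpr]
    constructor
    · intro h
      constructor
      · rintro p ⟨q, hq, rfl⟩
        rw [← M.evalFrom_of_append]
        exact (h q).mpr hq
      · rintro p ⟨q, hq, rfl⟩ hacc
        rw [← M.evalFrom_of_append] at hacc
        exact hq ((h q).mp hacc)
    · rintro ⟨h1, h2⟩ q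
      rw [M.evalFrom_of_append]
      constructor
      · intro hacc
        by_contra hq
        exact h2 _ ⟨q, hq, rfl⟩ hacc
      · intro hq
        exact h1 _ ⟨q, hq, rfl⟩
  set 𝒬 : Set (Set (List A)) := Set.range (fun u : List A => {z | u ++ z ∈ K}) with h𝒬
  set V : Set (Set Q × Set Q) := {v | v.1.Nonempty ∧ v.2.Nonempty ∧ Disjoint v.1 v.2 ∧
    v.1.ncard ≤ s ∧ v.2.ncard ≤ n - s} with hV
  set V' : Set (Set Q × Set Q) := {v ∈ V | (Lp v).Nonempty} with hV'
  have hXne : X.Nonempty := Set.nonempty_of_ncard_ne_zero (by omega)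
  have hXccard : Xᶜ.ncard = n - s := by
    have h := Set.ncard_add_ncard_compl X (Set.toFinite _) (Set.toFinite _)
    rw [hQn] at h
    omega
  have hXcne : Xᶜ.Nonempty := Set.nonempty_of_ncard_ne_zero (by omega)
  have h𝒬sub : 𝒬 ⊆ insert ∅ (Lp '' V') := by
    rintro _ ⟨u, rfl⟩
    show {z | u ++ z ∈ K} ∈ insert ∅ (Lp '' V')
    rcases Set.eq_empty_or_nonempty (Lp (pr u)) with hemp | hne'
    · rw [hquot u, hemp]
      exact Set.mem_insert _ _
    · refine Set.mem_insert_of_mem _ ⟨pr u, ⟨⟨?_, ?_, ?_, ?_, ?_⟩, hne'⟩, (hquot u).symm⟩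
      · exact hXne.image _
      · exact hXcne.image _
      · rw [Set.disjoint_left]
        rintro x ⟨q1, hq1, rfl⟩ ⟨q2, hq2, heq⟩
        obtain ⟨z, hz1, hz2⟩ := hne'
        exact hz2 _ ⟨q2, hq2, heq⟩ (hz1 _ ⟨q1, hq1, rfl⟩)
      · exact Set.ncard_image_le (Set.toFinite _)
      · exact (Set.ncard_image_le (Set.toFinite _)).trans (le_of_eq hXccard)
  have hcard1 : 𝒬.ncard ≤ 1 + V'.ncard := by
    have hfin : (Lp '' V').Finite := (Set.toFinite V').image _
    calc 𝒬.ncard ≤ (insert (∅ : Set (List A)) (Lp '' V')).ncard :=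
        Set.ncard_le_ncard h𝒬sub (hfin.insert _)
      _ ≤ 1 + (Lp '' V').ncard := by
          have := Set.ncard_insert_le (∅ : Set (List A)) (Lp '' V')
          omega
      _ ≤ 1 + V'.ncard := by
          have := Set.ncard_image_le (f := Lp) (Set.toFinite V')
          omega
  have hPsi : Psi n s = 1 + ∑ k ∈ Finset.Icc 1 s, ∑ l ∈ Finset.Icc 1 (n - s),
      Nat.choose n k * Nat.choose (n - k) l := by
    rw [Psi, if_neg]
    push_neg
    exact ⟨by omega, by omega⟩
  have hQ𝒬 : 𝒬.ncard = Psi n s := by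
    rw [← hsc]
    exact (stateComplexity_eq_ncard K).symm
  -- count V
  have hVcount : V.ncard ≤ ∑ k ∈ Finset.Icc 1 s, ∑ l ∈ Finset.Icc 1 (n - s),
      Nat.choose n k * Nat.choose (n - k) l := by
    have key := pair_count_le (Q := Q) s (n - s)
    rw [hQ] at key
    refine le_trans ?_ key
    rw [← Nat.card_coe_set_eq, ← Nat.card_eq_finsetCard]
    refine Nat.card_le_card_of_injective (fun v =>
      ⟨((Set.toFinite v.1.1).toFinset, (Set.toFinite v.1.2).toFinset), ?_⟩) ?_
    · simp only [Finset.mem_filter, Finset.mem_univ, true_and]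
      obtain ⟨v, h1, h2, h3, h4, h5⟩ := v
      refine ⟨?_, ?_, ?_, ?_, ?_⟩
      · obtain ⟨x, hx⟩ := h1
        exact ⟨x, (Set.Finite.mem_toFinset _).mpr hx⟩
      · obtain ⟨x, hx⟩ := h2
        exact ⟨x, (Set.Finite.mem_toFinset _).mpr hx⟩
      · rw [Finset.disjoint_left]
        intro a ha hb
        exact Set.disjoint_left.mp h3 ((Set.Finite.mem_toFinset _).mp ha)
          ((Set.Finite.mem_toFinset _).mp hb)
      · rw [← Set.ncard_eq_toFinset_card v.1 (Set.toFinite v.1)]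
        exact h4
      · rw [← Set.ncard_eq_toFinset_card v.2 (Set.toFinite v.2)]
        exact h5
    · intro a b hab
      have h := congrArg Subtype.val hab
      simp only [Prod.mk.injEq] at h
      apply Subtype.ext
      apply Prod.ext
      · have := congrArg (fun f : Finset Q => (f : Set Q)) h.1
        simpa [Set.Finite.coe_toFinset] using this
      · have := congrArg (fun f : Finset Q => (f : Set Q)) h.2
        simpa [Set.Finite.coe_toFinset] using this
  -- pigeonhole: V' = V
  have hTle : V.ncard ≤ V'.ncard := by
    rw [hPsi] at hQ𝒬
    omega
  have hV'eq : V' = V :=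
    Set.eq_of_subset_of_ncard_le (fun v hv => hv.1) hTle (Set.toFinite _)
  -- apply to (S, Sᶜ)
  have hSccard : Sᶜ.ncard = n - s := by
    have h := Set.ncard_add_ncard_compl S (Set.toFinite _) (Set.toFinite _)
    rw [hQn, hScard] at h
    omega
  have hSV : (S, Sᶜ) ∈ V := by
    refine ⟨⟨m, Set.mem_insert _ _⟩, ?_, disjoint_compl_right, le_of_eq hScard,
      le_of_eq hSccard⟩
    show Sᶜ.Nonempty
    exact Set.nonempty_of_ncard_ne_zero (by omega)
  rw [← hV'eq] at hSV
  obtain ⟨-, z, hz1, hz2⟩ := hSV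
  refine ⟨g ⁻¹' S, ?_, ⟨w₀ ++ z, ?_⟩⟩
  · rw [hpre, hpre_card]
  · intro q
    rw [M.evalFrom_of_append]
    constructor
    · intro hacc
      by_contra hq
      exact hz2 _ hq hacc
    · intro hq
      exact hz1 _ hq
end

section
/- Let M = (Q, Σ, δ, q₀, F) be a DFA with |Q| = n > 2 and ∅ ≠ F ⊊ Q, and suppose every singular (non-bijective) transformation of Q is induced by some nonempty word. Then for all disjoint subsets S, T ⊆ Q there exists a word w with S·w ⊆ F and T·w ⊆ Q ∖ F; that is, the language L_{S,T} = {w : S·w ⊆ F and T·w ⊆ Q ∖ F} is nonempty. -/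
/-- in a DFA with `n > 2` states and `∅ ≠ F ⊊ Q` whose
transformation semigroup contains every singular transformation, the language
`L_{S,T}` is nonempty for every pair of disjoint subsets `S, T ⊆ Q`. -/
theorem statement15 {A Q : Type*} [Fintype A] [Fintype Q] (M : DFA A Q)
    (n : ℕ) (hQ : Fintype.card Q = n) (hn : 2 < n)
    (hF1 : M.accept.Nonempty) (hF2 : M.accept ≠ Set.univ)
    (hsing : ∀ f : Q → Q, ¬ Function.Bijective f →
      ∃ w : List A, w ≠ [] ∧ (fun q => M.evalFrom q w) = f) :
    ∀ S T : Set Q, Disjoint S T →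
      ∃ w : List A, (fun q => M.evalFrom q w) '' S ⊆ M.accept ∧
        (fun q => M.evalFrom q w) '' T ⊆ M.acceptᶜ := by
  classical
  intro S T hST
  obtain ⟨a, ha⟩ := hF1
  obtain ⟨b, hb⟩ : ∃ b, b ∉ M.accept := by
    by_contra h
    push_neg at h
    exact hF2 (Set.eq_univ_of_forall h)
  set f : Q → Q := fun q => if q ∈ S then a else b with hf
  have hnb : ¬ Function.Bijective f := by
    intro hbij
    have hsurj := hbij.2
    have : ∀ q : Q, q = a ∨ q = b := by
      intro q
      obtain ⟨p, hp⟩ := hsurj q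
      by_cases hpS : p ∈ S
      · left; rw [← hp]; simp [f, hpS]
      · right; rw [← hp]; simp [f, hpS]
    have : Fintype.card Q ≤ Fintype.card ({a, b} : Set Q) := by
      apply Fintype.card_le_of_injective (fun q => ⟨q, by rcases this q with h | h <;> simp [h]⟩)
      intro x y hxy
      simpa using congrArg Subtype.val hxy
    have h2 : Fintype.card ({a, b} : Set Q) ≤ 2 := by
      rw [← Set.toFinset_card]
      have : ({a, b} : Set Q).toFinset ⊆ {a, b} := by intro x; simp
      calc ({a, b} : Set Q).toFinset.card ≤ ({a, b} : Finset Q).card :=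
            Finset.card_le_card this
        _ ≤ 2 := Finset.card_insert_le a {b} |>.trans (by simp)
    omega
  obtain ⟨w, -, hw⟩ := hsing f hnb
  refine ⟨w, ?_, ?_⟩
  · rintro x ⟨q, hq, rfl⟩
    rw [hw]
    simp only [f, if_pos hq]
    exact ha
  · rintro x ⟨q, hq, rfl⟩
    rw [hw]
    have hqS : q ∉ S := fun h => hST.ne_of_mem h hq rfl
    simp only [f, if_neg hqS]
    exact hb
end

section
/- Let M = (Q, Σ, δ, q₀, F) be a DFA with |Q| = n > 2 and ∅ ≠ F ⊊ Q, and suppose every singular (non-bijective) transformation of Q is induced by some nonempty word. Then for all pairs of disjoint subsets (S, T) and (S', T') of Q with (S, T) ≠ (S', T'), there exists a word w such that exactly one of the two conditions [S·w ⊆ F and T·w ⊆ Q ∖ F] and [S'·w ⊆ F and T'·w ⊆ Q ∖ F] holds; that is, the languages L_{S,T} and L_{S',T'} are distinct. -/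
/-- in a DFA with `n > 2` states and `∅ ≠ F ⊊ Q` whose
transformation semigroup contains every singular transformation, distinct pairs
of disjoint subsets yield distinct languages `L_{S,T}`: some word satisfies
exactly one of the two membership conditions. -/
theorem statement16 {A Q : Type*} [Fintype A] [Fintype Q] (M : DFA A Q)
    (n : ℕ) (hQ : Fintype.card Q = n) (hn : 2 < n)
    (hF1 : M.accept.Nonempty) (hF2 : M.accept ≠ Set.univ)
    (hsing : ∀ f : Q → Q, ¬ Function.Bijective f →
      ∃ w : List A, w ≠ [] ∧ (fun q => M.evalFrom q w) = f) :
    ∀ S T S' T' : Set Q, Disjoint S T → Disjoint S' T' → (S, T) ≠ (S', T') →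
      ∃ w : List A,
        Xor' ((fun q => M.evalFrom q w) '' S ⊆ M.accept ∧
              (fun q => M.evalFrom q w) '' T ⊆ M.acceptᶜ)
             ((fun q => M.evalFrom q w) '' S' ⊆ M.accept ∧
              (fun q => M.evalFrom q w) '' T' ⊆ M.acceptᶜ) := by
  classical
  intro S T S' T' hST hST' hne
  -- Key combinatorial step: find a set U separating the two conditions.
  have key : ∃ U : Set Q, Xor' (S ⊆ U ∧ Disjoint T U) (S' ⊆ U ∧ Disjoint T' U) := by
    by_contra h
    push_neg at h
    have hx : ∀ U : Set Q, (S ⊆ U ∧ Disjoint T U) ↔ (S' ⊆ U ∧ Disjoint T' U) := by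
      intro U
      have := h U
      unfold Xor' Xor at this
      tauto
    have h1 := (hx S).mp ⟨subset_rfl, hST.symm⟩
    have h2 := (hx S').mpr ⟨subset_rfl, hST'.symm⟩
    have h3 := (hx Tᶜ).mp ⟨Set.subset_compl_iff_disjoint_right.mpr hST, disjoint_compl_right⟩
    have h4 := (hx T'ᶜ).mpr ⟨Set.subset_compl_iff_disjoint_right.mpr hST', disjoint_compl_right⟩
    have hSeq : S = S' := le_antisymm h2.1 h1.1
    have hTeq : T = T' := by
      have t1 : T' ⊆ T := by
        have := h3.2
        intro p hp
        by_contra hpT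
        exact (this.le_bot ⟨hp, hpT⟩)
      have t2 : T ⊆ T' := by
        have := h4.2
        intro p hp
        by_contra hpT
        exact (this.le_bot ⟨hp, hpT⟩)
      exact le_antisymm t2 t1
    exact hne (by rw [hSeq, hTeq])
  obtain ⟨U, hU⟩ := key
  obtain ⟨a, ha⟩ := hF1
  obtain ⟨r, hr⟩ := (Set.ne_univ_iff_exists_notMem _).mp hF2
  set f : Q → Q := fun p => if p ∈ U then a else r with hf
  have hz : ∃ z : Q, z ≠ a ∧ z ≠ r := by
    by_contra hc
    push_neg at hc
    have hsub : (Finset.univ : Finset Q) ⊆ {a, r} := by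
      intro z _
      simp only [Finset.mem_insert, Finset.mem_singleton]
      rcases eq_or_ne z a with h' | h'
      · exact Or.inl h'
      · exact Or.inr (hc z h')
    have hcard := Finset.card_le_card hsub
    have h2 : ({a, r} : Finset Q).card ≤ 2 := Finset.card_insert_le _ _ |>.trans (by simp)
    rw [Finset.card_univ, hQ] at hcard
    omega
  have hnb : ¬ Function.Bijective f := by
    intro hb
    obtain ⟨z, hza, hzr⟩ := hz
    obtain ⟨p, hp⟩ := hb.surjective z
    by_cases hpU : p ∈ U
    · exact hza (by rw [← hp, hf]; simp [hpU])
    · exact hzr (by rw [← hp, hf]; simp [hpU])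
  obtain ⟨w, -, hfw⟩ := hsing f hnb
  refine ⟨w, ?_⟩
  rw [hfw]
  have hA : ∀ X : Set Q, f '' X ⊆ M.accept ↔ X ⊆ U := by
    intro X
    constructor
    · intro h p hp
      by_contra hpU
      have : f p ∈ M.accept := h ⟨p, hp, rfl⟩
      rw [hf] at this
      simp only [if_neg hpU] at this
      exact hr this
    · intro h p hp
      obtain ⟨q, hq, rfl⟩ := hp
      rw [hf]
      simpa [h hq] using ha
  have hC : ∀ X : Set Q, f '' X ⊆ M.acceptᶜ ↔ Disjoint X U := by
    intro X
    constructor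
    · intro h
      rw [Set.disjoint_left]
      intro p hp hpU
      have : f p ∈ M.acceptᶜ := h ⟨p, hp, rfl⟩
      rw [hf] at this
      simp only [if_pos hpU] at this
      exact this ha
    · intro h p hp
      obtain ⟨q, hq, rfl⟩ := hp
      have hqU : q ∉ U := Set.disjoint_left.mp h hq
      rw [hf]
      simpa [hqU] using hr
  simp only [hA, hC]
  exact hU
end

section
/- Let M = (Q, Σ, δ, q₀, F) be a DFA with |Q| = n, and let S ⊆ Q with 1 ≤ |S| ≤ n − 1. Suppose every singular (non-bijective) transformation of Q is induced by some nonempty word, and that P(M) is |S|-set-transitive. Then for all disjoint subsets S', T' ⊆ Q with 1 ≤ |S'| ≤ |S| and 1 ≤ |T'| ≤ n − |S|, there exists a word w with S·w = S' and (Q ∖ S)·w = T'. -/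
open Classical in
lemma exists_image_eq_aux {Q : Type*} [Fintype Q] (X Y : Set Q) (hY : Y.Nonempty)
    (h : Y.ncard ≤ X.ncard) : ∃ g : Q → Q, g '' X = Y := by
  have : Nonempty Y := hY.to_subtype
  have hcard : Fintype.card Y ≤ Fintype.card X := by
    rw [← Nat.card_eq_fintype_card, ← Nat.card_eq_fintype_card,
      Nat.card_coe_set_eq, Nat.card_coe_set_eq]
    exact h
  obtain ⟨i⟩ := Function.Embedding.nonempty_of_card_le hcard
  have hsurj : Function.Surjective (Function.invFun i) := Function.invFun_surjective i.injective
  obtain ⟨y0, hy0⟩ := hY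
  refine ⟨fun q => if hq : q ∈ X then ((Function.invFun i ⟨q, hq⟩ : Y) : Q) else y0, ?_⟩
  ext y
  constructor
  · rintro ⟨q, hq, rfl⟩
    simp only [dif_pos hq]
    exact (Function.invFun i ⟨q, hq⟩).2
  · intro hy
    obtain ⟨x, hx⟩ := hsurj ⟨y, hy⟩
    exact ⟨x, x.2, by simp only [dif_pos x.2, Subtype.coe_eta, hx]⟩

/-- if the transformation semigroup of a DFA contains every
singular transformation and `P(M)` is `|S|`-set-transitive, where
`1 ≤ |S| ≤ n - 1`, then every pair `(S', T')` of disjoint subsets with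
`1 ≤ |S'| ≤ |S|` and `1 ≤ |T'| ≤ n - |S|` is reached from `(S, Q ∖ S)` by
some word. -/
theorem statement17 {A Q : Type*} [Fintype A] [Fintype Q] (M : DFA A Q)
    (n : ℕ) (hQ : Fintype.card Q = n) (S : Set Q)
    (hS1 : 1 ≤ S.ncard) (hS2 : S.ncard ≤ n - 1)
    (hsing : ∀ f : Q → Q, ¬ Function.Bijective f →
      ∃ w : List A, w ≠ [] ∧ (fun q => M.evalFrom q w) = f)
    (htrans : ∀ X Y : Set Q, X.ncard = S.ncard → Y.ncard = S.ncard →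
      ∃ w : List A, Function.Bijective (fun q => M.evalFrom q w) ∧
        (fun q => M.evalFrom q w) '' X = Y) :
    ∀ S' T' : Set Q, Disjoint S' T' →
      1 ≤ S'.ncard → S'.ncard ≤ S.ncard →
      1 ≤ T'.ncard → T'.ncard ≤ n - S.ncard →
      ∃ w : List A, (fun q => M.evalFrom q w) '' S = S' ∧
        (fun q => M.evalFrom q w) '' Sᶜ = T' := by
  intro S' T' hdisj hT1 hT2 hU1 hU2
  have hScompl : Sᶜ.ncard = n - S.ncard := by
    have := Set.ncard_add_ncard_compl S
    rw [Nat.card_eq_fintype_card, hQ] at this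
    omega
  have hS'ne : S'.Nonempty := Set.nonempty_of_ncard_ne_zero (by omega)
  have hT'ne : T'.Nonempty := Set.nonempty_of_ncard_ne_zero (by omega)
  by_cases hcase : S'.ncard = S.ncard ∧ T'.ncard = n - S.ncard
  · -- permutation case
    obtain ⟨w, hbij, himg⟩ := htrans S S' rfl hcase.1
    refine ⟨w, himg, ?_⟩
    rw [Set.image_compl_eq hbij, himg]
    have hsub : T' ⊆ S'ᶜ := Set.subset_compl_iff_disjoint_left.mpr hdisj
    have hc : S'ᶜ.ncard = n - S'.ncard := by
      have := Set.ncard_add_ncard_compl S'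
      rw [Nat.card_eq_fintype_card, hQ] at this
      omega
    exact (Set.eq_of_subset_of_ncard_le hsub (by omega) (Set.toFinite _)).symm
  · -- singular case
    obtain ⟨gS, hgS⟩ := exists_image_eq_aux S S' hS'ne hT2
    obtain ⟨gT, hgT⟩ := exists_image_eq_aux Sᶜ T' hT'ne (by omega)
    classical
    set f : Q → Q := fun q => if q ∈ S then gS q else gT q with hf
    have hfS : f '' S = S' := by
      rw [← hgS]; exact Set.image_congr fun a ha => if_pos ha
    have hfSc : f '' Sᶜ = T' := by
      rw [← hgT]; exact Set.image_congr fun a ha => if_neg ha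
    have hnb : ¬ Function.Bijective f := by
      intro hb
      have h1 : (f '' S).ncard = S.ncard := Set.ncard_image_of_injective S hb.injective
      have h2 : (f '' Sᶜ).ncard = Sᶜ.ncard := Set.ncard_image_of_injective Sᶜ hb.injective
      rw [hfS] at h1; rw [hfSc] at h2
      exact hcase ⟨h1, by omega⟩
    obtain ⟨w, _, hw⟩ := hsing f hnb
    exact ⟨w, by rw [hw]; exact ⟨hfS, hfSc⟩⟩
end
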